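/- Let X be a real normed linear space and let x, y ∈ X. Then either y ∈ x⁺ or y ∈ x⁻. -/

import Mathlib

/-- `y ∈ x⁺`: `‖x + λ y‖ ≥ ‖x‖` for all `λ ≥ 0`. -/
def inPlus {X : Type*} [NormedAddCommGroup X] [NormedSpace ℝ X] (x y : X) : Prop :=
  ∀ l : ℝ, 0 ≤ l → ‖x‖ ≤ ‖x + l • y‖

/-- `y ∈ x⁻`: `‖x + λ y‖ ≥ ‖x‖` for all `λ ≤ 0`. -/
def inMinus {X : Type*} [NormedAddCommGroup X] [NormedSpace ℝ X] (x y : X) : Prop :=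
  ∀ l : ℝ, l ≤ 0 → ‖x‖ ≤ ‖x + l • y‖

theorem plus_or_minus {X : Type*} [NormedAddCommGroup X] [NormedSpace ℝ X] (x y : X) :
    inPlus x y ∨ inMinus x y := by
  by_cases h : inPlus x y
  · exact Or.inl h
  · right
    unfold inPlus at h
    push_neg at h
    obtain ⟨l₀, hl₀, hlt⟩ := h
    have hl₀pos : 0 < l₀ := by
      rcases hl₀.lt_or_eq with h | h
      · exact h
      · exfalso; rw [← h, zero_smul, add_zero] at hlt; exact lt_irrefl _ hlt
    intro l hl
    rcases hl.lt_or_eq with hl | hl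
    swap
    · rw [hl, zero_smul, add_zero]
    by_contra hcon
    push_neg at hcon
    set d : ℝ := l₀ - l with hd
    have hdpos : 0 < d := by simp [hd]; linarith
    set t : ℝ := l₀ / d with ht
    set s : ℝ := (-l) / d with hs
    have htpos : 0 < t := div_pos hl₀pos hdpos
    have hspos : 0 < s := div_pos (by linarith) hdpos
    have hts : t + s = 1 := by
      field_simp [ht, hs]
      rw [ht, hs, ← add_div, div_eq_one_iff_eq hdpos.ne', hd]; ring
    have hx : x = t • (x + l • y) + s • (x + l₀ • y) := by
      have h1 : t * l + s * l₀ = 0 := by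
        field_simp [ht, hs]
        ring
      rw [smul_add, smul_add, smul_smul, smul_smul]
      have : t • x + s • x = x := by
        rw [← add_smul, hts, one_smul]
      rw [add_add_add_comm, this, ← add_smul, h1, zero_smul, add_zero]
    have key : ‖x‖ ≤ t * ‖x + l • y‖ + s * ‖x + l₀ • y‖ := by
      calc ‖x‖ = ‖t • (x + l • y) + s • (x + l₀ • y)‖ := by rw [← hx]
        _ ≤ ‖t • (x + l • y)‖ + ‖s • (x + l₀ • y)‖ := norm_add_le _ _
        _ = t * ‖x + l • y‖ + s * ‖x + l₀ • y‖ := by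
            rw [norm_smul, norm_smul, Real.norm_eq_abs, Real.norm_eq_abs,
              abs_of_pos htpos, abs_of_pos hspos]
    have hts' : t * ‖x‖ + s * ‖x‖ = ‖x‖ := by rw [← add_mul, hts, one_mul]
    nlinarith [key, hts', mul_pos htpos (sub_pos.mpr hcon), mul_pos hspos (sub_pos.mpr hlt)]
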